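/- Let A be an m×N matrix with rational entries, let c ∈ ℚ^N, and let Z ⊆ {1,…,N}. Define P = {x ∈ ℝ^N : x_i ≥ 0 for all i, Ax = 0, x_i = 0 for all i ∈ Z, and c·x ≥ 1}, and suppose P is nonempty and that for every coordinate i ∉ Z there is no point x ∈ P with x_i = 0. Then every q ∈ P lies on an extreme ray of the cone C = {x ∈ ℝ^N : x_i ≥ 0 for all i and Ax = 0}; that is, whenever q = a + b with a, b ∈ C, both a and b are nonnegative real scalar multiples of q. -/

import Mathlib

/-- If the polyhedron
`P = {x : x ≥ 0, Ax = 0, x_i = 0 (i ∈ Z), c·x ≥ 1}` is nonempty and no point of `P`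
has `x_i = 0` for a coordinate `i ∉ Z`, then every `q ∈ P` lies on an extreme ray of
the cone `C = {x : x ≥ 0, Ax = 0}`. -/
theorem stmt_8 {m N : ℕ} (A : Matrix (Fin m) (Fin N) ℚ) (c : Fin N → ℚ)
    (Z : Set (Fin N))
    (P : Set (Fin N → ℝ))
    (hP : P = {x | (∀ i, 0 ≤ x i) ∧ (A.map ((↑) : ℚ → ℝ)).mulVec x = 0 ∧
      (∀ i ∈ Z, x i = 0) ∧ 1 ≤ ∑ i, (c i : ℝ) * x i})
    (hne : P.Nonempty)
    (hmax : ∀ i ∉ Z, ¬ ∃ x ∈ P, x i = 0)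
    (C : Set (Fin N → ℝ))
    (hCdef : C = {x | (∀ i, 0 ≤ x i) ∧ (A.map ((↑) : ℚ → ℝ)).mulVec x = 0}) :
    ∀ q ∈ P, ∀ a b : Fin N → ℝ, a ∈ C → b ∈ C → q = a + b →
      (∃ μ : ℝ, 0 ≤ μ ∧ a = μ • q) ∧ (∃ ν : ℝ, 0 ≤ ν ∧ b = ν • q) := by
  classical
  subst hP
  subst hCdef
  rintro q ⟨hq0, hqA, hqZ, hqc⟩ a b ⟨ha0, haA⟩ ⟨hb0, hbA⟩ hab
  set M := A.map ((↑) : ℚ → ℝ) with hM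
  have hqmem : q ∈ {x : Fin N → ℝ | (∀ i, 0 ≤ x i) ∧ M.mulVec x = 0 ∧
      (∀ i ∈ Z, x i = 0) ∧ 1 ≤ ∑ i, (c i : ℝ) * x i} := ⟨hq0, hqA, hqZ, hqc⟩
  -- q is strictly positive off Z
  have hqpos : ∀ i, i ∉ Z → 0 < q i := by
    intro i hi
    rcases (hq0 i).lt_or_eq with h | h
    · exact h
    · exact absurd ⟨q, hqmem, h.symm⟩ (hmax i hi)
  -- Key lemma: a vector in the cone, vanishing on Z and at some coordinate off Z, is zero
  have key : ∀ w : Fin N → ℝ, (∀ i, 0 ≤ w i) → M.mulVec w = 0 →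
      (∀ i ∈ Z, w i = 0) → ∀ i0, i0 ∉ Z → w i0 = 0 → w = 0 := by
    intro w hw0 hwA hwZ i0 hi0 hwi0
    by_contra hw
    set cw := ∑ i, (c i : ℝ) * w i with hcw
    by_cases hc : 0 < cw
    · apply hmax i0 hi0
      refine ⟨cw⁻¹ • w, ⟨?_, ?_, ?_, ?_⟩, ?_⟩
      · intro i; exact mul_nonneg (inv_nonneg.2 hc.le) (hw0 i)
      · rw [Matrix.mulVec_smul, hwA, smul_zero]
      · intro i hi; simp [hwZ i hi]
      · have heq : ∑ i, (c i : ℝ) * (cw⁻¹ • w) i = cw⁻¹ * cw := by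
          rw [hcw, Finset.mul_sum]
          refine Finset.sum_congr rfl fun i _ => ?_
          simp [Pi.smul_apply, smul_eq_mul]; ring
        rw [heq, inv_mul_cancel₀ hc.ne']
      · simp [Pi.smul_apply, hwi0]
    · push_neg at hc
      obtain ⟨j, hj⟩ : ∃ j, 0 < w j := by
        by_contra h; push_neg at h
        exact hw (funext fun i => le_antisymm (h i) (hw0 i))
      set S : Finset (Fin N) := Finset.univ.filter (fun i => 0 < w i) with hS
      have hSne : S.Nonempty := ⟨j, by simp [hS, hj]⟩
      obtain ⟨j0, hj0S, hj0min⟩ := S.exists_min_image (fun i => q i / w i) hSne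
      have hwj0 : 0 < w j0 := by simpa [hS] using hj0S
      have hj0Z : j0 ∉ Z := fun h => by simp [hwZ j0 h] at hwj0
      set s := q j0 / w j0 with hs
      have hs0 : 0 ≤ s := div_nonneg (hq0 j0) hwj0.le
      set y := q - s • w with hy
      have hy0 : ∀ i, 0 ≤ y i := by
        intro i
        by_cases hwi : 0 < w i
        · have hmin : s ≤ q i / w i := hj0min i (by simp [hS, hwi])
          have h2 : s * w i ≤ q i := (le_div_iff₀ hwi).1 hmin
          simp only [hy, Pi.sub_apply, Pi.smul_apply, smul_eq_mul]
          linarith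
        · have hwi0' : w i = 0 := le_antisymm (not_lt.1 hwi) (hw0 i)
          simp [hy, hwi0', hq0 i]
      have hyA : M.mulVec y = 0 := by
        rw [hy, Matrix.mulVec_sub, Matrix.mulVec_smul, hqA, hwA, smul_zero, sub_zero]
      have hyZ : ∀ i ∈ Z, y i = 0 := fun i hi => by
        simp [hy, hqZ i hi, hwZ i hi]
      have hyc : 1 ≤ ∑ i, (c i : ℝ) * y i := by
        have heq : ∑ i, (c i : ℝ) * y i = (∑ i, (c i : ℝ) * q i) - s * cw := by
          rw [hcw, Finset.mul_sum, ← Finset.sum_sub_distrib]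
          refine Finset.sum_congr rfl fun i _ => ?_
          simp only [hy, Pi.sub_apply, Pi.smul_apply, smul_eq_mul]; ring
        have : s * cw ≤ 0 := mul_nonpos_of_nonneg_of_nonpos hs0 hc
        rw [heq]; linarith
      have hyj0 : y j0 = 0 := by
        simp only [hy, Pi.sub_apply, Pi.smul_apply, smul_eq_mul, hs]
        field_simp
        ring
      exact hmax j0 hj0Z ⟨y, ⟨hy0, hyA, hyZ, hyc⟩, hyj0⟩
  -- a vanishes on Z
  have haZ : ∀ i ∈ Z, a i = 0 := by
    intro i hi
    have h := congrFun hab i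
    simp only [Pi.add_apply, hqZ i hi] at h
    have h1 := ha0 i
    have h2 := hb0 i
    linarith
  -- some coordinate is off Z
  obtain ⟨i1, hi1⟩ : ∃ i, i ∉ Z := by
    by_contra h; push_neg at h
    have hq' : ∀ i, q i = 0 := fun i => hqZ i (h i)
    simp [hq'] at hqc; linarith
  set T : Finset (Fin N) := Finset.univ.filter (fun i => i ∉ Z) with hT
  have hTne : T.Nonempty := ⟨i1, by simp [hT, hi1]⟩
  obtain ⟨i0, hi0T, hi0min⟩ := T.exists_min_image (fun i => a i / q i) hTne
  have hi0Z : i0 ∉ Z := by simpa [hT] using hi0T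
  set t := a i0 / q i0 with ht
  have ht0 : 0 ≤ t := div_nonneg (ha0 i0) (hqpos i0 hi0Z).le
  set w := a - t • q with hw
  have hw0 : ∀ i, 0 ≤ w i := by
    intro i
    by_cases hi : i ∈ Z
    · simp [hw, haZ i hi, hqZ i hi]
    · have hmin : t ≤ a i / q i := hi0min i (by simp [hT, hi])
      have h2 : t * q i ≤ a i := (le_div_iff₀ (hqpos i hi)).1 hmin
      simp only [hw, Pi.sub_apply, Pi.smul_apply, smul_eq_mul]
      linarith
  have hwA : M.mulVec w = 0 := by
    rw [hw, Matrix.mulVec_sub, Matrix.mulVec_smul, haA, hqA, smul_zero, sub_zero]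
  have hwZ : ∀ i ∈ Z, w i = 0 := fun i hi => by
    simp [hw, haZ i hi, hqZ i hi]
  have hwi0 : w i0 = 0 := by
    have hqne : q i0 ≠ 0 := (hqpos i0 hi0Z).ne'
    simp only [hw, Pi.sub_apply, Pi.smul_apply, smul_eq_mul, ht]
    field_simp
    ring
  have hweq : w = 0 := key w hw0 hwA hwZ i0 hi0Z hwi0
  have haq : a = t • q := by
    have := sub_eq_zero.1 (hw ▸ hweq : a - t • q = 0)
    exact this
  have hbq : b = (1 - t) • q := by
    have hb : b = q - a := by
      funext i
      have := congrFun hab i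
      simp only [Pi.add_apply] at this
      simp [Pi.sub_apply]; linarith
    rw [hb, haq]
    funext i
    simp [Pi.smul_apply, smul_eq_mul]; ring
  refine ⟨⟨t, ht0, haq⟩, ⟨1 - t, ?_, hbq⟩⟩
  have hbi : b i1 = (1 - t) * q i1 := by rw [hbq]; simp [smul_eq_mul]
  have h1 := hb0 i1
  have h2 := hqpos i1 hi1
  nlinarith
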